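/- Let f : ℝ → ℝ be continuously differentiable and F(u) = ∫₀ᵘ f(t) dt. Let u ∈ C²([0,1]) satisfy u''(r) + (2/r) u'(r) + f(u(r)) = 0 for 0 < r < 1, with u'(0) = u(1) = 0, and let ψ ∈ C³([0,1]) with ψ(0) = 0. Then ∫₀¹ [ 2 (ψ(r) r²)' F(u(r)) + ( 2 ψ'(r) r² − (ψ(r) r²)' ) u(r) f(u(r)) + (1/2) u(r)² ψ'''(r) r² ] dr = ψ(1) (u'(1))². -/

import Mathlib

open Set Real

/-- The simplified generalized Pohozhaev identity in dimension `n = 3`.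
`u` is C² on `[0,1]`, solves `u'' + (2/r) u' + f(u) = 0` on `(0,1)` with
`u'(0) = u(1) = 0`, and `ψ` is C³ on `[0,1]` with `ψ(0) = 0`.  Here
`(ψ r²)' = ψ' r² + 2 ψ r` has been expanded. -/
theorem pohozhaev_dim3
    (f : ℝ → ℝ) (hf : ContDiff ℝ 1 f)
    (F : ℝ → ℝ) (hF : ∀ x : ℝ, F x = ∫ t in (0:ℝ)..x, f t)
    (u u' u'' : ℝ → ℝ)
    (hu : ∀ r ∈ Icc (0:ℝ) 1, HasDerivAt u (u' r) r)
    (hu' : ∀ r ∈ Icc (0:ℝ) 1, HasDerivAt u' (u'' r) r)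
    (hu''c : ContinuousOn u'' (Icc (0:ℝ) 1))
    (ψ ψ' ψ'' ψ''' : ℝ → ℝ)
    (hψ : ∀ r ∈ Icc (0:ℝ) 1, HasDerivAt ψ (ψ' r) r)
    (hψ' : ∀ r ∈ Icc (0:ℝ) 1, HasDerivAt ψ' (ψ'' r) r)
    (hψ'' : ∀ r ∈ Icc (0:ℝ) 1, HasDerivAt ψ'' (ψ''' r) r)
    (hψ'''c : ContinuousOn ψ''' (Icc (0:ℝ) 1))
    (hψ0 : ψ 0 = 0)
    (hode : ∀ r ∈ Ioo (0:ℝ) 1, u'' r + 2 / r * u' r + f (u r) = 0)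
    (hbc0 : u' 0 = 0) (hbc1 : u 1 = 0) :
    ∫ r in (0:ℝ)..1,
        (2 * (ψ' r * r ^ 2 + 2 * ψ r * r) * F (u r)
          + (2 * ψ' r * r ^ 2 - (ψ' r * r ^ 2 + 2 * ψ r * r)) * (u r * f (u r))
          + 1 / 2 * (u r) ^ 2 * ψ''' r * r ^ 2)
      = ψ 1 * (u' 1) ^ 2 := by
  have hFfun : F = fun x => ∫ t in (0:ℝ)..x, f t := funext hF
  subst hFfun
  have hfc : Continuous f := hf.continuous
  have hFd : ∀ x : ℝ, HasDerivAt (fun y => ∫ t in (0:ℝ)..y, f t) (f x) x := fun x =>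
    intervalIntegral.integral_hasDerivAt_right (hfc.intervalIntegrable _ _)
      (hfc.stronglyMeasurableAtFilter _ _) hfc.continuousAt
  set G : ℝ → ℝ := fun x =>
    2 * ψ x * x ^ 2 * (u' x ^ 2 / 2 + (∫ t in (0:ℝ)..(u x), f t))
    + (2 * ψ x * x - ψ' x * x ^ 2) * (u x * u' x)
    + (2 * ψ x + ψ'' x * x ^ 2 - 2 * ψ' x * x) * (u x) ^ 2 / 2 with hGdef
  have key : ∀ r ∈ Icc (0:ℝ) 1, HasDerivAt G
      ((2 * ψ' r * r ^ 2 + 4 * ψ r * r) * (u' r ^ 2 / 2 + (∫ t in (0:ℝ)..(u r), f t))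
        + 2 * ψ r * r ^ 2 * (u' r * u'' r + f (u r) * u' r)
        + (2 * ψ' r * r + 2 * ψ r - ψ'' r * r ^ 2 - 2 * ψ' r * r) * (u r * u' r)
        + (2 * ψ r * r - ψ' r * r ^ 2) * (u' r * u' r + u r * u'' r)
        + ψ''' r * r ^ 2 * ((u r) ^ 2 / 2)
        + (2 * ψ r + ψ'' r * r ^ 2 - 2 * ψ' r * r) * (u r * u' r)) r := by
    intro r hr
    have hur := hu r hr
    have hu'r := hu' r hr
    have hψr := hψ r hr
    have hψ'r := hψ' r hr
    have hψ''r := hψ'' r hr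
    have hx2 : HasDerivAt (fun x : ℝ => x ^ 2) (2 * r) r := by
      simpa using hasDerivAt_pow 2 r
    have hid : HasDerivAt (fun x : ℝ => x) 1 r := hasDerivAt_id r
    have hFu : HasDerivAt (fun x => ∫ t in (0:ℝ)..(u x), f t) (f (u r) * u' r) r :=
      (hFd (u r)).comp r hur
    have h1 := ((hψr.const_mul 2).mul hx2).mul (((hu'r.pow 2).div_const 2).add hFu)
    have h2 := (((hψr.const_mul 2).mul hid).sub (hψ'r.mul hx2)).mul (hur.mul hu'r)
    have h3 := ((((hψr.const_mul 2).add (hψ''r.mul hx2)).sub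
      ((hψ'r.const_mul 2).mul hid)).mul (hur.pow 2)).div_const 2
    have hc := (h1.add h2).add h3
    refine (show HasDerivAt G _ r from hc).congr_deriv ?_
    simp only [Pi.add_apply, Pi.mul_apply, Pi.sub_apply, Pi.pow_apply]
    norm_num
    ring
  have hGc : ContinuousOn G (Icc (0:ℝ) 1) := fun r hr =>
    (key r hr).continuousAt.continuousWithinAt
  have hderiv : ∀ r ∈ Ioo (0:ℝ) 1, HasDerivAt G
      (2 * (ψ' r * r ^ 2 + 2 * ψ r * r) * (∫ t in (0:ℝ)..(u r), f t)
        + (2 * ψ' r * r ^ 2 - (ψ' r * r ^ 2 + 2 * ψ r * r)) * (u r * f (u r))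
        + 1 / 2 * (u r) ^ 2 * ψ''' r * r ^ 2) r := by
    intro r hr
    have hr0 : r ≠ 0 := ne_of_gt hr.1
    have h2 : u'' r = -(2 / r * u' r) - f (u r) := by
      have := hode r hr; linarith
    have := key r (Ioo_subset_Icc_self hr)
    convert this using 1
    rw [h2]
    field_simp
    ring
  have hcu : ContinuousOn u (Icc (0:ℝ) 1) := fun r hr =>
    (hu r hr).continuousAt.continuousWithinAt
  have hcu' : ContinuousOn u' (Icc (0:ℝ) 1) := fun r hr =>
    (hu' r hr).continuousAt.continuousWithinAt
  have hcψ : ContinuousOn ψ (Icc (0:ℝ) 1) := fun r hr =>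
    (hψ r hr).continuousAt.continuousWithinAt
  have hcψ' : ContinuousOn ψ' (Icc (0:ℝ) 1) := fun r hr =>
    (hψ' r hr).continuousAt.continuousWithinAt
  have hcF : Continuous (fun x : ℝ => ∫ t in (0:ℝ)..x, f t) :=
    continuous_iff_continuousAt.2 fun x => (hFd x).continuousAt
  have hint : IntervalIntegrable (fun r =>
      2 * (ψ' r * r ^ 2 + 2 * ψ r * r) * (∫ t in (0:ℝ)..(u r), f t)
        + (2 * ψ' r * r ^ 2 - (ψ' r * r ^ 2 + 2 * ψ r * r)) * (u r * f (u r))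
        + 1 / 2 * (u r) ^ 2 * ψ''' r * r ^ 2) MeasureTheory.volume 0 1 := by
    apply ContinuousOn.intervalIntegrable
    rw [uIcc_of_le zero_le_one]
    apply ContinuousOn.add
    apply ContinuousOn.add
    · exact (continuousOn_const.mul ((hcψ'.mul (continuousOn_pow 2)).add
        ((continuousOn_const.mul hcψ).mul continuousOn_id))).mul
        (hcF.comp_continuousOn hcu)
    · exact (((continuousOn_const.mul hcψ').mul (continuousOn_pow 2)).sub
        ((hcψ'.mul (continuousOn_pow 2)).add
          ((continuousOn_const.mul hcψ).mul continuousOn_id))).mul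
        (hcu.mul (hfc.comp_continuousOn hcu))
    · exact ((continuousOn_const.mul (hcu.pow 2)).mul hψ'''c).mul (continuousOn_pow 2)
  have hFTC := intervalIntegral.integral_eq_sub_of_hasDeriv_right_of_le zero_le_one
    hGc (fun r hr => (hderiv r hr).hasDerivWithinAt) hint
  rw [hFTC, hGdef]
  simp only [hbc1, hψ0, intervalIntegral.integral_same]
  norm_num
  ring
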